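/- Let d ≥ 1 and n ≥ 1, and for each y ∈ Fin n let (M_{b|y})_{b ∈ Fin d} be positive semidefinite Hermitian d×d complex matrices satisfying Tr(M_{b|y} M_{b'|y}) = 1 if b = b' and 0 if b ≠ b', Tr(M_{b|y} M_{b'|y'}) = 1/d whenever y ≠ y', and ∑_{b} M_{b|y} = 1 for every y (a collection of measurements in mutually unbiased bases). For η ∈ (0,1], define the noisy multi-measurement M^η by M^η_{b|y} := η • M_{b|y} + (1−η) • (1/d) • 1. Then M^η is classical (as a multi-measurement) if and only if the measurements in M^η are jointly measurable, i.e. there exist a finite index set Λ, positive semidefinite matrices G_λ with ∑_λ G_λ = 1, and reals p_λ(b,y) ≥ 0 with ∑_{b ∈ Fin d} p_λ(b,y) = 1 for every y and λ, such that M^η_{b|y} = ∑_λ p_λ(b,y) • G_λ for all b,y. -/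

import Mathlib

open Matrix BigOperators
open scoped ComplexOrder

noncomputable section

lemma key_zero {d n : ℕ} (hd : 1 ≤ d) (hn : 1 ≤ n)
    (M : Fin n → Fin d → Matrix (Fin d) (Fin d) ℂ)
    (horth : ∀ y : Fin n, ∀ b b' : Fin d,
      (M y b * M y b').trace = if b = b' then 1 else 0)
    (hmub : ∀ y y' : Fin n, y ≠ y' → ∀ b b' : Fin d,
      (M y b * M y' b').trace = 1 / (d : ℂ))
    (hcomplete : ∀ y : Fin n, ∑ b : Fin d, M y b = 1)
    (η : ℝ) (hη : η ∈ Set.Ioc (0 : ℝ) 1)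
    (β : Fin d × Fin n → ℝ)
    (hβ : ∑ p : Fin d × Fin n, β p •
      (η • M p.2 p.1 + ((1 - η) * (d : ℝ)⁻¹) • (1 : Matrix (Fin d) (Fin d) ℂ)) = 0)
    (q : Fin d × Fin n → ℝ) (hq : ∀ y : Fin n, ∑ b : Fin d, q (b, y) = 1) :
    ∑ p : Fin d × Fin n, β p * q p = 0 := by
  have hdC : (d : ℂ) ≠ 0 := Nat.cast_ne_zero.mpr (by omega)
  have hdR : (d : ℝ) ≠ 0 := Nat.cast_ne_zero.mpr (by omega)
  -- trace of each M y b is 1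
  have htr : ∀ y b, (M y b).trace = 1 := by
    intro y b
    have h1 : (M y b * ∑ b', M y b').trace = (M y b).trace := by
      rw [hcomplete y, mul_one]
    rw [Finset.mul_sum, Matrix.trace_sum] at h1
    simp_rw [horth] at h1
    simpa using h1.symm
  -- total sum of β is 0 (take trace of hβ)
  have htrβ : (∑ p : Fin d × Fin n, (β p : ℂ)) = 0 := by
    have h := congrArg Matrix.trace hβ
    rw [Matrix.trace_sum, Matrix.trace_zero] at h
    have hcard : (Matrix.trace (1 : Matrix (Fin d) (Fin d) ℂ)) = (d : ℂ) := by
      simp [Matrix.trace_one]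
    calc (∑ p : Fin d × Fin n, (β p : ℂ))
        = ∑ p : Fin d × Fin n, (β p : ℂ) *
          ((η : ℂ) * (M p.2 p.1).trace + ((1 - η) * (d : ℝ)⁻¹ : ℝ) * (d : ℂ)) := by
          apply Finset.sum_congr rfl; intro p _
          rw [htr]
          push_cast
          field_simp
          ring
      _ = 0 := by
          rw [← h]
          apply Finset.sum_congr rfl; intro p _
          rw [Matrix.trace_smul, Matrix.trace_add, Matrix.trace_smul, Matrix.trace_smul,
            hcard, htr]
          simp [Complex.real_smul]
          ring
  have hsumR : (∑ p : Fin d × Fin n, β p) = 0 := by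
    have : ((∑ p : Fin d × Fin n, β p : ℝ) : ℂ) = 0 := by push_cast; exact htrβ
    exact_mod_cast this
  -- the η-part alone sums to zero
  have hT : (∑ p : Fin d × Fin n, β p • M p.2 p.1) = 0 := by
    have hsplit : ∑ p : Fin d × Fin n, β p •
        (η • M p.2 p.1 + ((1 - η) * (d : ℝ)⁻¹) • (1 : Matrix (Fin d) (Fin d) ℂ))
        = η • (∑ p : Fin d × Fin n, β p • M p.2 p.1) +
          ((∑ p : Fin d × Fin n, β p) * ((1 - η) * (d : ℝ)⁻¹)) •
            (1 : Matrix (Fin d) (Fin d) ℂ) := by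
      rw [Finset.sum_congr rfl (fun p _ => by
        rw [smul_add, smul_comm (β p) η, smul_smul (β p)] :
        ∀ p ∈ Finset.univ, β p • (η • M p.2 p.1
          + ((1 - η) * (d : ℝ)⁻¹) • (1 : Matrix (Fin d) (Fin d) ℂ))
          = η • (β p • M p.2 p.1) + (β p * ((1 - η) * (d : ℝ)⁻¹)) •
            (1 : Matrix (Fin d) (Fin d) ℂ))]
      rw [Finset.sum_add_distrib, ← Finset.smul_sum, ← Finset.sum_smul, ← Finset.sum_mul]
    rw [hsplit, hsumR, zero_mul, zero_smul, add_zero] at hβ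
    exact (smul_eq_zero.mp hβ).resolve_left (ne_of_gt hη.1)
  -- per-(b', y') linear relation
  have hkey : ∀ (y' : Fin n) (b' : Fin d), (β (b', y') : ℂ)
      = -((∑ y ∈ ({y'}ᶜ : Finset (Fin n)), ∑ b : Fin d, (β (b, y) : ℂ)) * (d : ℂ)⁻¹) := by
    intro y' b'
    have h := congrArg (fun X => (X * M y' b').trace) hT
    simp only [Finset.sum_mul, smul_mul_assoc, Matrix.trace_sum, Matrix.trace_smul,
      Matrix.zero_mul, Matrix.trace_zero] at h
    rw [Fintype.sum_prod_type_right] at h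
    rw [Fintype.sum_eq_add_sum_compl y'] at h
    have h1 : ∑ b : Fin d, β (b, y') • (M y' b * M y' b').trace = (β (b', y') : ℂ) := by
      simp [horth, Complex.real_smul, mul_ite]
    have h2 : ∑ y ∈ ({y'}ᶜ : Finset (Fin n)), ∑ b : Fin d,
        β (b, y) • (M y b * M y' b').trace
        = (∑ y ∈ ({y'}ᶜ : Finset (Fin n)), ∑ b : Fin d, (β (b, y) : ℂ)) * (d : ℂ)⁻¹ := by
      rw [Finset.sum_mul]
      apply Finset.sum_congr rfl; intro y hy
      rw [Finset.sum_mul]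
      apply Finset.sum_congr rfl; intro b _
      have hne : y ≠ y' := by simpa using hy
      rw [hmub y y' hne, Complex.real_smul, one_div]
    rw [h1, h2] at h
    linear_combination h
  set b0 : Fin d := ⟨0, hd⟩ with hb0
  have hconst : ∀ (y : Fin n) (b : Fin d), β (b, y) = β (b0, y) := by
    intro y b
    have : (β (b, y) : ℂ) = (β (b0, y) : ℂ) := by rw [hkey y b, hkey y b0]
    exact_mod_cast this
  have hrow : ∀ y : Fin n, ∑ b : Fin d, β (b, y) = (d : ℝ) * β (b0, y) := by
    intro y
    rw [Finset.sum_congr rfl (fun b _ => hconst y b)]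
    simp [mul_comm]
  have hcol : ∑ y : Fin n, β (b0, y) = 0 := by
    have h := hsumR
    rw [Fintype.sum_prod_type_right] at h
    simp_rw [hrow] at h
    rw [← Finset.mul_sum] at h
    exact (mul_eq_zero.mp h).resolve_left hdR
  rw [Fintype.sum_prod_type_right]
  calc ∑ y : Fin n, ∑ b : Fin d, β (b, y) * q (b, y)
      = ∑ y : Fin n, β (b0, y) := by
        apply Finset.sum_congr rfl; intro y _
        rw [Finset.sum_congr rfl (fun b _ => by rw [hconst y b]), ← Finset.mul_sum,
          hq y, mul_one]
    _ = 0 := hcol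

/-- The noncontextual measurement-assignment polytope of a multi-measurement. -/
def multiPolytope {d : ℕ} {B Y : Type*} [Fintype B] [Fintype Y]
    (M : B × Y → Matrix (Fin d) (Fin d) ℂ) : Set (B × Y → ℝ) :=
  {q | (∀ p, 0 ≤ q p) ∧ (∀ y : Y, ∑ b : B, q (b, y) = 1) ∧
    ∀ β : B × Y → ℝ, (∑ p : B × Y, β p • M p = 0) → (∑ p : B × Y, β p * q p = 0)}

/-- A multi-measurement is classical. -/
def IsClassicalMulti {d : ℕ} {B Y : Type*} [Fintype B] [Fintype Y]
    (M : B × Y → Matrix (Fin d) (Fin d) ℂ) : Prop :=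
  ∃ (n : ℕ) (G : Fin n → Matrix (Fin d) (Fin d) ℂ) (q : Fin n → B × Y → ℝ),
    (∀ l, (G l).PosSemidef) ∧ (∑ l, G l = 1) ∧
    (∀ l, q l ∈ multiPolytope M) ∧
    (∀ b : B, ∀ y : Y, M (b, y) = ∑ l, q l (b, y) • G l)

/-- A multi-measurement is jointly measurable (its measurements are compatible): it is
obtained by classical postprocessing of a single parent POVM. -/
def JointlyMeasurable {d : ℕ} {B Y : Type*} [Fintype B] [Fintype Y]
    (M : B × Y → Matrix (Fin d) (Fin d) ℂ) : Prop :=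
  ∃ (n : ℕ) (G : Fin n → Matrix (Fin d) (Fin d) ℂ) (p : Fin n → B × Y → ℝ),
    (∀ l, (G l).PosSemidef) ∧ (∑ l, G l = 1) ∧
    (∀ l, ∀ q : B × Y, 0 ≤ p l q) ∧
    (∀ l, ∀ y : Y, ∑ b : B, p l (b, y) = 1) ∧
    (∀ b : B, ∀ y : Y, M (b, y) = ∑ l, p l (b, y) • G l)

theorem noisy_mub_classical_iff_jointly_measurable
    {d n : ℕ} (hd : 1 ≤ d) (hn : 1 ≤ n)
    (M : Fin n → Fin d → Matrix (Fin d) (Fin d) ℂ)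
    (hpsd : ∀ y b, (M y b).PosSemidef)
    (horth : ∀ y : Fin n, ∀ b b' : Fin d,
      (M y b * M y b').trace = if b = b' then 1 else 0)
    (hmub : ∀ y y' : Fin n, y ≠ y' → ∀ b b' : Fin d,
      (M y b * M y' b').trace = 1 / (d : ℂ))
    (hcomplete : ∀ y : Fin n, ∑ b : Fin d, M y b = 1)
    (η : ℝ) (hη : η ∈ Set.Ioc (0 : ℝ) 1) :
    IsClassicalMulti
        (fun p : Fin d × Fin n =>
          η • M p.2 p.1 + ((1 - η) * (d : ℝ)⁻¹) • (1 : Matrix (Fin d) (Fin d) ℂ)) ↔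
      JointlyMeasurable
        (fun p : Fin d × Fin n =>
          η • M p.2 p.1 + ((1 - η) * (d : ℝ)⁻¹) • (1 : Matrix (Fin d) (Fin d) ℂ)) := by
  constructor
  · rintro ⟨m, G, q, hG, hG1, hpoly, hrep⟩
    exact ⟨m, G, q, hG, hG1, fun l p => (hpoly l).1 p, fun l y => (hpoly l).2.1 y, hrep⟩
  · rintro ⟨m, G, p, hG, hG1, hpos, hnorm, hrep⟩
    refine ⟨m, G, p, hG, hG1, fun l => ⟨hpos l, hnorm l, fun β hβ => ?_⟩, hrep⟩
    exact key_zero hd hn M horth hmub hcomplete η hη β hβ (p l) (hnorm l)
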